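/- Let (f, τ, c) be degree −2 branched covering data and let X ⊆ ℂ be an indecomposable continuum with f(X) = X. Suppose D ⊆ X is a union of composants of X (i.e. for every x ∈ D the composant of x in X is contained in D) and D is a first category (meagre) subset of X. Then there exists a composant T of X such that f(T) ∩ D = ∅. -/

import Mathlib

open Set Topology

/-- A continuum: a nonempty compact connected subset of ℂ. -/
def IsContinuum (K : Set ℂ) : Prop := IsCompact K ∧ IsConnected K

/-- An indecomposable continuum: non-degenerate and not the union of two
proper subcontinua. -/
def IndecomposableC (X : Set ℂ) : Prop :=
  IsContinuum X ∧ X.Nontrivial ∧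
    ¬ ∃ A B : Set ℂ, IsContinuum A ∧ IsContinuum B ∧ A ⊆ X ∧ B ⊆ X ∧
      A ≠ X ∧ B ≠ X ∧ A ∪ B = X

/-- The composant of a point `x` in `X`: the union of all proper subcontinua
of `X` containing `x`. -/
def Composant (X : Set ℂ) (x : ℂ) : Set ℂ :=
  ⋃₀ {P : Set ℂ | IsContinuum P ∧ P ⊆ X ∧ P ≠ X ∧ x ∈ P}

/-- `Z` is a composant of `X`. -/
def IsComposant (X Z : Set ℂ) : Prop := ∃ x ∈ X, Z = Composant X x

/-- Auxiliary separation contradiction: if `X \ P` is separated by `u, v` and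
`P ∪ ((X\P) ∩ u)` is separated by `W₁, W₂` with `P` missing `W₂`, then `X`
itself would be disconnected. -/
lemma sep_contradiction (X P u v W₁ W₂ : Set ℂ) (hXc : IsPreconnected X)
    (hPne : P.Nonempty) (hPcl : IsClosed P) (hPX : P ⊆ X)
    (hu : IsOpen u) (hv : IsOpen v) (hW₁ : IsOpen W₁) (hW₂ : IsOpen W₂)
    (hcover : X \ P ⊆ u ∪ v) (hdisj : (X \ P) ∩ (u ∩ v) = ∅)
    (hsub : P ∪ ((X \ P) ∩ u) ⊆ W₁ ∪ W₂)
    (hPW2 : P ∩ W₂ = ∅)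
    (hA2 : (((X \ P) ∩ u) ∩ W₂).Nonempty)
    (hempty : (P ∪ ((X \ P) ∩ u)) ∩ (W₁ ∩ W₂) = ∅) : False := by
  have hPW1 : P ⊆ W₁ := by
    intro p hp
    rcases hsub (Or.inl hp) with h | h
    · exact h
    · exact absurd hPW2 (Set.nonempty_iff_ne_empty.mp ⟨p, hp, h⟩)
  have hG₁ : IsOpen (W₁ ∪ (Pᶜ ∩ v)) := hW₁.union (hPcl.isOpen_compl.inter hv)
  have hG₂ : IsOpen (W₂ ∩ (Pᶜ ∩ u)) := hW₂.inter (hPcl.isOpen_compl.inter hu)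
  have hXcov : X ⊆ (W₁ ∪ (Pᶜ ∩ v)) ∪ (W₂ ∩ (Pᶜ ∩ u)) := by
    intro x hx
    by_cases hxP : x ∈ P
    · exact Or.inl (Or.inl (hPW1 hxP))
    · rcases hcover ⟨hx, hxP⟩ with hxu | hxv
      · rcases hsub (Or.inr ⟨⟨hx, hxP⟩, hxu⟩) with h | h
        · exact Or.inl (Or.inl h)
        · exact Or.inr ⟨h, hxP, hxu⟩
      · exact Or.inl (Or.inr ⟨hxP, hxv⟩)
  have hne₁ : (X ∩ (W₁ ∪ (Pᶜ ∩ v))).Nonempty := by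
    obtain ⟨p, hp⟩ := hPne
    exact ⟨p, hPX hp, Or.inl (hPW1 hp)⟩
  have hne₂ : (X ∩ (W₂ ∩ (Pᶜ ∩ u))).Nonempty := by
    obtain ⟨a, ⟨⟨haX, haP⟩, hau⟩, haW⟩ := hA2
    exact ⟨a, haX, haW, haP, hau⟩
  obtain ⟨z, hzX, hz₁, hz₂⟩ := hXc _ _ hG₁ hG₂ hXcov hne₁ hne₂
  obtain ⟨hzW₂, hzP, hzu⟩ := hz₂
  have hzA : z ∈ (X \ P) ∩ u := ⟨⟨hzX, hzP⟩, hzu⟩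
  rcases hz₁ with hzW₁ | ⟨_, hzv⟩
  · exact absurd hempty (Set.nonempty_iff_ne_empty.mp ⟨z, Or.inr hzA, hzW₁, hzW₂⟩)
  · exact absurd hdisj (Set.nonempty_iff_ne_empty.mp ⟨z, ⟨hzX, hzP⟩, hzu, hzv⟩)

/-- The piece `P ∪ ((X\P) ∩ u)` of a separation of `X \ P` is preconnected. -/
lemma piece_preconnected (X P u v : Set ℂ) (hXc : IsPreconnected X)
    (hPc : IsPreconnected P) (hPne : P.Nonempty) (hPcl : IsClosed P) (hPX : P ⊆ X)
    (hu : IsOpen u) (hv : IsOpen v)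
    (hcover : X \ P ⊆ u ∪ v) (hdisj : (X \ P) ∩ (u ∩ v) = ∅) :
    IsPreconnected (P ∪ ((X \ P) ∩ u)) := by
  intro W₁ W₂ hW₁ hW₂ hsub h1 h2
  by_contra hne
  have hempty : (P ∪ ((X \ P) ∩ u)) ∩ (W₁ ∩ W₂) = ∅ :=
    Set.not_nonempty_iff_eq_empty.mp hne
  have hPcase : P ∩ W₁ = ∅ ∨ P ∩ W₂ = ∅ := by
    by_contra hboth
    push_neg at hboth
    obtain ⟨n1, n2⟩ := hboth
    obtain ⟨z, hz⟩ := hPc W₁ W₂ hW₁ hW₂ (fun p hp => hsub (Or.inl hp)) n1 n2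
    exact absurd hempty (Set.nonempty_iff_ne_empty.mp ⟨z, Or.inl hz.1, hz.2⟩)
  rcases hPcase with hP1 | hP2
  · have hA1 : (((X \ P) ∩ u) ∩ W₁).Nonempty := by
      obtain ⟨z, hz, hzW⟩ := h1
      rcases hz with hzP | hzA
      · exact absurd hP1 (Set.nonempty_iff_ne_empty.mp ⟨z, hzP, hzW⟩)
      · exact ⟨z, hzA, hzW⟩
    exact sep_contradiction X P u v W₂ W₁ hXc hPne hPcl hPX hu hv hW₂ hW₁
      hcover hdisj (by rwa [Set.union_comm W₂ W₁]) hP1 hA1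
      (by rwa [Set.inter_comm W₂ W₁])
  · have hA2 : (((X \ P) ∩ u) ∩ W₂).Nonempty := by
      obtain ⟨z, hz, hzW⟩ := h2
      rcases hz with hzP | hzA
      · exact absurd hP2 (Set.nonempty_iff_ne_empty.mp ⟨z, hzP, hzW⟩)
      · exact ⟨z, hzA, hzW⟩
    exact sep_contradiction X P u v W₁ W₂ hXc hPne hPcl hPX hu hv hW₁ hW₂
      hcover hdisj hsub hP2 hA2 hempty

/-- In an indecomposable continuum, the complement of a proper subcontinuum is
dense. -/
lemma compl_dense (X P : Set ℂ) (hX : IndecomposableC X) (hP : IsContinuum P)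
    (hPX : P ⊆ X) (hPne : P ≠ X) : X ⊆ closure (X \ P) := by
  obtain ⟨⟨hXcomp, hXconn⟩, hXnt, hXind⟩ := hX
  have hXcl : IsClosed X := hXcomp.isClosed
  have hPcl : IsClosed P := hP.1.isClosed
  have hSne : (X \ P).Nonempty := by
    rcases Set.exists_of_ssubset (ssubset_of_subset_of_ne hPX hPne) with ⟨x, hx, hxP⟩
    exact ⟨x, hx, hxP⟩
  by_cases hpre : IsPreconnected (X \ P)
  · -- closure of X \ P is a subcontinuum; if proper, contradiction
    have hQX : closure (X \ P) ⊆ X := closure_minimal diff_subset hXcl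
    have hQcont : IsContinuum (closure (X \ P)) :=
      ⟨hXcomp.of_isClosed_subset isClosed_closure hQX, hSne.closure, hpre.closure⟩
    by_cases hQeq : closure (X \ P) = X
    · rw [hQeq]
    · exfalso
      refine hXind ⟨P, closure (X \ P), hP, hQcont, hPX, hQX, hPne, hQeq, ?_⟩
      apply Set.Subset.antisymm (Set.union_subset hPX hQX)
      intro x hx
      by_cases hxP : x ∈ P
      · exact Or.inl hxP
      · exact Or.inr (subset_closure ⟨hx, hxP⟩)
  · -- X \ P disconnected gives a decomposition of X outright
    exfalso
    rw [IsPreconnected] at hpre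
    push_neg at hpre
    obtain ⟨u, v, hu, hv, hcover, hne_u, hne_v, hdisj'⟩ := hpre
    have hdisj : (X \ P) ∩ (u ∩ v) = ∅ := hdisj'
    have hdisj2 : (X \ P) ∩ (v ∩ u) = ∅ := by rwa [Set.inter_comm v u]
    have hPc : IsPreconnected P := hP.2.isPreconnected
    have hPnon : P.Nonempty := hP.2.nonempty
    have hconnA := piece_preconnected X P u v hXconn.isPreconnected hPc hPnon hPcl hPX
      hu hv hcover hdisj
    have hconnB := piece_preconnected X P v u hXconn.isPreconnected hPc hPnon hPcl hPX
      hv hu (by rwa [Set.union_comm v u]) hdisj2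
    set A : Set ℂ := P ∪ ((X \ P) ∩ u) with hA
    set B : Set ℂ := P ∪ ((X \ P) ∩ v) with hB
    have hAeq : A = X ∩ (P ∪ vᶜ) := by
      apply Set.Subset.antisymm
      · rintro x (hx | ⟨⟨hxX, hxP⟩, hxu⟩)
        · exact ⟨hPX hx, Or.inl hx⟩
        · refine ⟨hxX, Or.inr fun hxv => ?_⟩
          exact absurd hdisj (Set.nonempty_iff_ne_empty.mp ⟨x, ⟨hxX, hxP⟩, hxu, hxv⟩)
      · rintro x ⟨hxX, hx⟩
        by_cases hxP : x ∈ P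
        · exact Or.inl hxP
        · rcases hcover ⟨hxX, hxP⟩ with h | h
          · exact Or.inr ⟨⟨hxX, hxP⟩, h⟩
          · rcases hx with h' | h'
            · exact Or.inl h'
            · exact absurd h h'
    have hBeq : B = X ∩ (P ∪ uᶜ) := by
      apply Set.Subset.antisymm
      · rintro x (hx | ⟨⟨hxX, hxP⟩, hxv⟩)
        · exact ⟨hPX hx, Or.inl hx⟩
        · refine ⟨hxX, Or.inr fun hxu => ?_⟩
          exact absurd hdisj (Set.nonempty_iff_ne_empty.mp ⟨x, ⟨hxX, hxP⟩, hxu, hxv⟩)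
      · rintro x ⟨hxX, hx⟩
        by_cases hxP : x ∈ P
        · exact Or.inl hxP
        · rcases hcover ⟨hxX, hxP⟩ with h | h
          · rcases hx with h' | h'
            · exact Or.inl h'
            · exact absurd h h'
          · exact Or.inr ⟨⟨hxX, hxP⟩, h⟩
    have hAcl : IsClosed A := by
      rw [hAeq]; exact hXcl.inter (hPcl.union hv.isClosed_compl)
    have hBcl : IsClosed B := by
      rw [hBeq]; exact hXcl.inter (hPcl.union hu.isClosed_compl)
    have hAX : A ⊆ X := Set.union_subset hPX (fun x hx => hx.1.1)
    have hBX : B ⊆ X := Set.union_subset hPX (fun x hx => hx.1.1)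
    have hAcont : IsContinuum A :=
      ⟨hXcomp.of_isClosed_subset hAcl hAX, ⟨hPnon.choose, Or.inl hPnon.choose_spec⟩, hconnA⟩
    have hBcont : IsContinuum B :=
      ⟨hXcomp.of_isClosed_subset hBcl hBX, ⟨hPnon.choose, Or.inl hPnon.choose_spec⟩, hconnB⟩
    have hAne : A ≠ X := by
      obtain ⟨z, hzS, hzv⟩ := hne_v
      intro h
      have hzA : z ∈ A := h.symm ▸ hzS.1
      rcases hzA with hzP | ⟨_, hzu⟩
      · exact hzS.2 hzP
      · exact absurd hdisj (Set.nonempty_iff_ne_empty.mp ⟨z, hzS, hzu, hzv⟩)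
    have hBne : B ≠ X := by
      obtain ⟨z, hzS, hzu⟩ := hne_u
      intro h
      have hzB : z ∈ B := h.symm ▸ hzS.1
      rcases hzB with hzP | ⟨_, hzv⟩
      · exact hzS.2 hzP
      · exact absurd hdisj (Set.nonempty_iff_ne_empty.mp ⟨z, hzS, hzu, hzv⟩)
    refine hXind ⟨A, B, hAcont, hBcont, hAX, hBX, hAne, hBne, ?_⟩
    apply Set.Subset.antisymm (Set.union_subset hAX hBX)
    intro x hx
    by_cases hxP : x ∈ P
    · exact Or.inl (Or.inl hxP)
    · rcases hcover ⟨hx, hxP⟩ with h | h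
      · exact Or.inl (Or.inr ⟨⟨hx, hxP⟩, h⟩)
      · exact Or.inr (Or.inr ⟨⟨hx, hxP⟩, h⟩)

/-- A proper subcontinuum of an indecomposable continuum that is fully
invariant under the 2-fold covering cannot map onto the whole continuum. -/
lemma image_ne (f τ : ℂ → ℂ) (hf : Continuous f) (hτ : Continuous τ)
    (hττ : ∀ x, τ (τ x) = x) (hfτ : ∀ x, f (τ x) = f x)
    (hfib : ∀ x y, f x = f y → y = x ∨ y = τ x)
    (X : Set ℂ) (hX : IndecomposableC X) (hfX : f '' X = X)
    (P : Set ℂ) (hP : IsContinuum P) (hPX : P ⊆ X) (hPne : P ≠ X) :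
    f '' P ≠ X := by
  intro hfP
  have hsub : X ⊆ P ∪ τ '' P := by
    intro x hx
    have hx' : f x ∈ f '' P := by
      have hmem : f x ∈ f '' X := ⟨x, hx, rfl⟩
      rw [hfX] at hmem
      rw [hfP]
      exact hmem
    obtain ⟨p, hp, hpx⟩ := hx'
    rcases hfib p x hpx with h | h
    · exact Or.inl (h ▸ hp)
    · exact Or.inr ⟨p, hp, h.symm⟩
  have hτPcl : IsClosed (τ '' P) := (hP.1.image hτ).isClosed
  have hXτP : X ⊆ τ '' P := by
    have hdense := compl_dense X P hX hP hPX hPne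
    have hSsub : X \ P ⊆ τ '' P := by
      rintro s ⟨hsX, hsP⟩
      rcases hsub hsX with h | h
      · exact absurd h hsP
      · exact h
    intro x hx
    exact closure_minimal hSsub hτPcl (hdense hx)
  have hXP : X ⊆ P := by
    intro x hx
    obtain ⟨p, hpP, hpx⟩ := hXτP hx
    obtain ⟨q, hqP, hqp⟩ := hXτP (hPX hpP)
    rw [← hpx, ← hqp, hττ]
    exact hqP
  exact hPne (Set.Subset.antisymm hPX hXP)

theorem exists_composant_with_image_disjoint_from_meagre_union
    (f τ : ℂ → ℂ) (c : ℂ)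
    (hf : Continuous f) (hopen : IsOpenMap f)
    (hperfect : ∀ K : Set ℂ, IsCompact K → IsCompact (f ⁻¹' K))
    (hτ : Continuous τ) (hττ : ∀ x, τ (τ x) = x) (hfτ : ∀ x, f (τ x) = f x)
    (hfib : ∀ x y, f x = f y → y = x ∨ y = τ x)
    (hc : τ c = c) (hcuniq : ∀ x, τ x = x → x = c)
    (X : Set ℂ) (hX : IndecomposableC X) (hfX : f '' X = X)
    (D : Set ℂ) (hD : D ⊆ X)
    (hDunion : ∀ x ∈ D, Composant X x ⊆ D)
    (hmeagre : IsMeagre (Subtype.val ⁻¹' D : Set X)) :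
    ∃ T : Set ℂ, IsComposant X T ∧ f '' T ∩ D = ∅ := by
  have hXcl : IsClosed X := hX.1.1.isClosed
  -- X \ D is nonempty (Baire category)
  have hXD : (X \ D).Nonempty := by
    by_contra h
    have hXsubD : X ⊆ D := by
      intro x hx
      by_contra hxD
      exact h ⟨x, hx, hxD⟩
    haveI : CompleteSpace X := hXcl.completeSpace_coe
    haveI : Nonempty X := hX.2.1.nonempty.to_subtype
    have huniv : IsMeagre (univ : Set X) :=
      hmeagre.mono (fun x _ => hXsubD x.2)
    have : ((univ : Set X)ᶜ : Set X) ∈ residual X := huniv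
    rw [Set.compl_univ] at this
    have hd : Dense (∅ : Set X) := dense_of_mem_residual this
    obtain ⟨z, hz⟩ := hd.nonempty
    exact hz
  obtain ⟨y, hyX, hyD⟩ := hXD
  have hy' : y ∈ f '' X := hfX.symm ▸ hyX
  obtain ⟨x, hxX, hfxy⟩ := hy'
  refine ⟨Composant X x, ⟨x, hxX, rfl⟩, ?_⟩
  rw [Set.eq_empty_iff_forall_notMem]
  rintro w ⟨⟨z, hzT, rfl⟩, hwD⟩
  obtain ⟨P, ⟨hPcont, hPX, hPne, hxP⟩, hzP⟩ := hzT
  have hQcont : IsContinuum (f '' P) :=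
    ⟨hPcont.1.image hf, hPcont.2.image f hf.continuousOn⟩
  have hQX : f '' P ⊆ X := hfX ▸ Set.image_mono hPX
  have hQne : f '' P ≠ X := image_ne f τ hf hτ hττ hfτ hfib X hX hfX P hPcont hPX hPne
  have hyComp : y ∈ Composant X (f z) :=
    ⟨f '' P, ⟨hQcont, hQX, hQne, Set.mem_image_of_mem f hzP⟩,
      hfxy ▸ Set.mem_image_of_mem f hxP⟩
  exact hyD (hDunion (f z) hwD hyComp)
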